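/- Let n = a·d + b where a ≥ 1, d ≥ 1 and 0 ≤ b < d, and let C = {π a permutation of {1,…,n} : π(i) ≡ i (mod d) for all 1 ≤ i ≤ n}. Then any two distinct permutations in C have Chebyshev distance at least d, and |C| = ((a+1)!)^b · (a!)^{d−b}. -/
import Mathlib


/-- The Chebyshev distance between two permutations of `{1,…,n}`
(represented as permutations of `Fin n`): `max_i |σ(i) − τ(i)|`. -/
def permDist {n : ℕ} (σ τ : Equiv.Perm (Fin n)) : ℕ :=
  Finset.univ.sup fun i => Nat.dist (σ i : ℕ) (τ i : ℕ)

lemma fiber_card (n a d b : ℕ) (hd : 1 ≤ d) (hb : b < d) (hn : n = a * d + b)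
    (r : Fin d) :
    Fintype.card {i : Fin n // (i : ℕ) % d = (r : ℕ)} =
      if (r : ℕ) < b then a + 1 else a := by
  set m : ℕ := if (r : ℕ) < b then a + 1 else a with hm
  have hrd : (r : ℕ) < d := r.2
  have key : ∀ k : ℕ, k < m → (r : ℕ) + k * d < n := by
    intro k hk
    rcases lt_or_ge (r : ℕ) b with h | h
    · have : k ≤ a := by simp [hm, h] at hk; omega
      have : k * d ≤ a * d := Nat.mul_le_mul_right d this
      omega
    · have hka : k < a := by simp [hm, Nat.not_lt.mpr h] at hk; omega
      have : (k + 1) * d ≤ a * d := Nat.mul_le_mul_right d hka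
      have : k * d + d ≤ a * d := by nlinarith
      omega
  have e : {i : Fin n // (i : ℕ) % d = (r : ℕ)} ≃ Fin m := by
    refine ⟨fun i => ⟨(i : ℕ) / d, ?_⟩, fun k => ⟨⟨(r : ℕ) + (k : ℕ) * d, key k k.2⟩, ?_⟩, ?_, ?_⟩
    · obtain ⟨⟨i, hi⟩, hir⟩ := i
      have hdiv : d * (i / d) + (r : ℕ) = i := by
        conv_rhs => rw [← Nat.div_add_mod i d]
        simp only [hir]
      rcases lt_or_ge (r : ℕ) b with h | h
      · have : d * (i / d) < a * d + b := by omega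
        have : i / d < a + 1 := by nlinarith
        simpa [hm, h] using this
      · have : d * (i / d) + b ≤ i := by omega
        have : d * (i / d) < a * d := by omega
        have : i / d < a := by nlinarith
        simpa [hm, Nat.not_lt.mpr h] using this
    · simp [Nat.add_mul_mod_self_right, Nat.mod_eq_of_lt hrd]
    · rintro ⟨⟨i, hi⟩, hir⟩
      ext
      simp only
      conv_rhs => rw [← Nat.div_add_mod i d]
      simp [hir]; ring
    · intro k
      ext
      simp [Nat.add_mul_div_right _ _ hd, Nat.div_eq_of_lt hrd]
  rw [Fintype.card_congr e, Fintype.card_fin]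

theorem stmt4 (n a d b : ℕ) (ha : 1 ≤ a) (hd : 1 ≤ d) (hb : b < d)
    (hn : n = a * d + b)
    (C : Finset (Equiv.Perm (Fin n)))
    (hC : C = Finset.univ.filter fun π : Equiv.Perm (Fin n) =>
      ∀ i : Fin n, (π i : ℕ) % d = (i : ℕ) % d) :
    (∀ π ∈ C, ∀ σ ∈ C, π ≠ σ → d ≤ permDist π σ) ∧
      C.card = (Nat.factorial (a + 1)) ^ b * (Nat.factorial a) ^ (d - b) := by
  constructor
  · intro π hπ σ hσ hne
    simp only [hC, Finset.mem_filter] at hπ hσ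
    obtain ⟨i, hi⟩ : ∃ i, π i ≠ σ i := by
      by_contra h
      push_neg at h
      exact hne (Equiv.ext h)
    have h1 : (π i : ℕ) % d = (σ i : ℕ) % d := by rw [hπ.2 i, hσ.2 i]
    have h2 : (π i : ℕ) ≠ (σ i : ℕ) := fun h => hi (Fin.ext h)
    have hdvd : d ∣ Nat.dist (π i : ℕ) (σ i : ℕ) := by
      rcases le_total (π i : ℕ) (σ i : ℕ) with h | h
      · rw [Nat.dist_eq_sub_of_le h]
        exact (Nat.modEq_iff_dvd' h).mp h1
      · rw [Nat.dist_eq_sub_of_le_right h]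
        exact (Nat.modEq_iff_dvd' h).mp h1.symm
    have hpos : Nat.dist (π i : ℕ) (σ i : ℕ) ≠ 0 := fun h =>
      h2 (Nat.eq_of_dist_eq_zero h)
    calc d ≤ Nat.dist (π i : ℕ) (σ i : ℕ) := Nat.le_of_dvd (Nat.pos_of_ne_zero hpos) hdvd
      _ ≤ permDist π σ := Finset.le_sup (f := fun j => Nat.dist (π j : ℕ) (σ j : ℕ)) (Finset.mem_univ i)
  · set f : Fin n → Fin d := fun i => ⟨(i : ℕ) % d, Nat.mod_lt _ hd⟩ with hf
    have hcond : ∀ π : Equiv.Perm (Fin n),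
        (∀ i : Fin n, (π i : ℕ) % d = (i : ℕ) % d) ↔ f ∘ π = f := by
      intro π
      constructor
      · intro h; funext i; exact Fin.ext (h i)
      · intro h i
        have := congrFun h i
        exact congrArg Fin.val this
    have hcard : C.card = Fintype.card {g : Equiv.Perm (Fin n) // f ∘ g = f} := by
      rw [hC, Fintype.card_subtype]
      congr 1
      apply Finset.filter_congr
      intro π _
      simp [hcond π]
    rw [hcard, DomMulAct.stabilizer_card f]
    have hfiber : ∀ r : Fin d,
        Fintype.card {i : Fin n // f i = r} = if (r : ℕ) < b then a + 1 else a := by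
      intro r
      rw [← fiber_card n a d b hd hb hn r]
      apply Fintype.card_congr
      exact Equiv.subtypeEquivRight fun i => by
        simp [hf, Fin.ext_iff]
    calc ∏ r : Fin d, (Fintype.card {i : Fin n // f i = r}).factorial
        = ∏ r : Fin d, (if (r : ℕ) < b then Nat.factorial (a + 1) else Nat.factorial a) := by
          apply Finset.prod_congr rfl
          intro r _
          rw [hfiber r]
          split <;> rfl
      _ = ∏ r ∈ Finset.range d, (if r < b then Nat.factorial (a + 1) else Nat.factorial a) := by
          rw [← Fin.prod_univ_eq_prod_range]
      _ = (Nat.factorial (a + 1)) ^ b * (Nat.factorial a) ^ (d - b) := by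
          have hfilt : Finset.filter (fun x => x < b) (Finset.range d) = Finset.range b := by
            ext x; simp; omega
          rw [Finset.prod_ite, Finset.prod_const, Finset.prod_const, Finset.filter_not, hfilt,
            Finset.card_range, Finset.card_sdiff_of_subset (by intro x; simp; omega),
            Finset.card_range, Finset.card_range]
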